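/- Let c_n(x;λ) denote monic Charlier polynomials, satisfying c_{n+1}(x;λ) = (x - n - λ) c_n(x;λ) - nλ c_{n-1}(x;λ), c_{-1} = 0, c_0 = 1, with λ > 0. Setting κ_n = n(Σ_{j≥n+1} λ^j/j!)/(Σ_{j≥n} λ^j/j!) and a_n(x) = c_n(x;λ) + κ_n c_{n-1}(x;λ), the polynomials a_n satisfy a_{n+1}(x) = (x - α_n) a_n(x) - α̂_{n-1} a_{n-1}(x), where α_n = n + λ + κ_n - κ_{n+1} and α̂_{n-1} = λ n (Σ_{j≥n+1} λ^j/j!)(Σ_{j≥n-1} λ^j/j!)/(Σ_{j≥n} λ^j/j!)². -/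

import Mathlib

open Polynomial

/-- For Charlier polynomials `c_n`, the combinations `a_n = c_n + κ_n c_{n-1}` with the tail-sum
connection coefficients satisfy a three-term recurrence with explicit coefficients. -/

theorem stmt_8 (lam : ℝ) (hlam : 0 < lam)
    (S : ℕ → ℝ) (hS : ∀ n, S n = ∑' j : ℕ, lam ^ (j + n) / Nat.factorial (j + n))
    (κ : ℕ → ℝ) (hκ : ∀ n : ℕ, 1 ≤ n → κ n = n * S (n + 1) / S n)
    (c a : ℕ → Polynomial ℝ)
    (hc0 : c 0 = 1) (hc1 : c 1 = X - C lam)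
    (hcrec : ∀ n : ℕ, 1 ≤ n →
      c (n + 1) = (X - C ((n : ℝ) + lam)) * c n - C ((n : ℝ) * lam) * c (n - 1))
    (ha0 : a 0 = 1)
    (ha : ∀ n : ℕ, 1 ≤ n → a n = c n + C (κ n) * c (n - 1)) :
    ∀ n : ℕ, 1 ≤ n →
      a (n + 1) = (X - C ((n : ℝ) + lam + κ n - κ (n + 1))) * a n
        - C (lam * n * S (n + 1) * S (n - 1) / (S n) ^ 2) * a (n - 1) := by
  have hsum : ∀ n : ℕ, Summable (fun j : ℕ => lam ^ (j + n) / Nat.factorial (j + n)) := by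
    intro n
    exact (Real.summable_pow_div_factorial lam).comp_injective (add_left_injective n)
  have hSpos : ∀ n : ℕ, 0 < S n := by
    intro n
    rw [hS n]
    refine Summable.tsum_pos (hsum n) (fun j => by positivity) 0 (by positivity)
  have hSne : ∀ n : ℕ, S n ≠ 0 := fun n => (hSpos n).ne'
  have hSrec : ∀ n : ℕ, S n = lam ^ n / Nat.factorial n + S (n + 1) := by
    intro n
    rw [hS n, hS (n + 1), (hsum n).tsum_eq_zero_add]
    congr 1
    · simp
    · exact tsum_congr fun j => by rw [show j + 1 + n = j + (n + 1) from by omega]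
  have e4 : ∀ m : ℕ, lam * (lam ^ m / Nat.factorial m)
      = ((m : ℝ) + 1) * (lam ^ (m + 1) / Nat.factorial (m + 1)) := by
    intro m
    rw [pow_succ, Nat.factorial_succ]
    push_cast
    have : (Nat.factorial m : ℝ) ≠ 0 := by positivity
    field_simp
  have core : ∀ m : ℕ, lam * S (m + 2) * S m
      = ((m : ℝ) + 2) * S (m + 3) * S (m + 1) - ((m : ℝ) + 1) * S (m + 2) ^ 2
        - S (m + 2) * S (m + 1) + lam * S (m + 1) ^ 2 := by
    intro m
    have e1 := hSrec m
    have e2 := hSrec (m + 1)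
    have e3 := hSrec (m + 2)
    have h4 := e4 m
    have h5 := e4 (m + 1)
    push_cast at h4 h5
    rw [e1, e2, e3]
    linear_combination (lam ^ (m + 2) / Nat.factorial (m + 2) + S (m + 3)) * h4
      - (lam ^ (m + 1) / Nat.factorial (m + 1) + lam ^ (m + 2) / Nat.factorial (m + 2)
        + S (m + 3)) * h5
  have hA : ∀ m : ℕ, κ (m + 1) * S (m + 1) = ((m : ℝ) + 1) * S (m + 2) := by
    intro m
    rw [hκ (m + 1) (by omega), div_mul_cancel₀ _ (hSne (m + 1)),
      show m + 1 + 1 = m + 2 from rfl]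
    push_cast
    ring
  have hB : ∀ m : ℕ, κ (m + 2) * S (m + 2) = ((m : ℝ) + 2) * S (m + 3) := by
    intro m
    rw [hκ (m + 2) (by omega), div_mul_cancel₀ _ (hSne (m + 2)),
      show m + 2 + 1 = m + 3 from rfl]
    push_cast
    ring
  have id1 : ∀ m : ℕ, lam * ((m : ℝ) + 1) * S (m + 2) * S m / S (m + 1) ^ 2
      = κ (m + 1) * κ (m + 2) - κ (m + 1) ^ 2 - κ (m + 1) + ((m : ℝ) + 1) * lam := by
    intro m
    rw [div_eq_iff (pow_ne_zero 2 (hSne (m + 1)))]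
    linear_combination ((m : ℝ) + 1) * core m
      + (κ (m + 1) * S (m + 1) + ((m : ℝ) + 1) * S (m + 2) + S (m + 1)
        - κ (m + 2) * S (m + 1)) * hA m
      - ((m : ℝ) + 1) * S (m + 1) * hB m
  intro n hn
  obtain ⟨m, rfl⟩ : ∃ m, n = m + 1 := ⟨n - 1, by omega⟩
  match m with
  | 0 =>
    have H2 : a 2 = c 2 + C (κ 2) * c 1 := ha 2 (by omega)
    have H1 : a 1 = c 1 + C (κ 1) * c 0 := ha 1 (by omega)
    have R1 : c 2 = (X - C ((1 : ℝ) + lam)) * c 1 - C ((1 : ℝ) * lam) * c 0 := by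
      have := hcrec 1 (by omega); push_cast at this; exact this
    have hrw : lam * ((0 + 1 : ℕ) : ℝ) * S (0 + 1 + 1) * S (0 + 1 - 1) / S (0 + 1) ^ 2
        = κ 1 * κ 2 - κ 1 ^ 2 - κ 1 + lam := by
      have h := id1 0
      norm_num at h ⊢
      linear_combination h
    rw [show (0 + 1 + 1 : ℕ) = 2 from rfl] at hrw ⊢
    rw [hrw, H2, H1, R1, hc1, hc0, ha0]
    simp only [map_add, map_mul, map_sub, map_pow, map_one, map_natCast, map_ofNat]
    push_cast
    ring
  | k + 1 =>
    have H3 : a (k + 3) = c (k + 3) + C (κ (k + 3)) * c (k + 2) := ha (k + 3) (by omega)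
    have H2 : a (k + 2) = c (k + 2) + C (κ (k + 2)) * c (k + 1) := ha (k + 2) (by omega)
    have H1 : a (k + 1) = c (k + 1) + C (κ (k + 1)) * c k := ha (k + 1) (by omega)
    have R2 : c (k + 3) = (X - C (((k + 2 : ℕ) : ℝ) + lam)) * c (k + 2)
        - C (((k + 2 : ℕ) : ℝ) * lam) * c (k + 1) := hcrec (k + 2) (by omega)
    have R1 : c (k + 2) = (X - C (((k + 1 : ℕ) : ℝ) + lam)) * c (k + 1)
        - C (((k + 1 : ℕ) : ℝ) * lam) * c k := hcrec (k + 1) (by omega)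
    have hrw : lam * ((k + 2 : ℕ) : ℝ) * S (k + 3) * S (k + 1) / S (k + 2) ^ 2
        = κ (k + 2) * κ (k + 3) - κ (k + 2) ^ 2 - κ (k + 2) + ((k + 2 : ℕ) : ℝ) * lam := by
      have h := id1 (k + 1)
      simp only [show k + 1 + 1 = k + 2 from rfl, show k + 1 + 2 = k + 3 from rfl] at h
      push_cast at h ⊢
      linear_combination h
    have hrw2 : (κ (k + 2) * κ (k + 3) - κ (k + 2) ^ 2 - κ (k + 2)
          + ((k + 2 : ℕ) : ℝ) * lam) * κ (k + 1)
        = κ (k + 2) * ((k + 1 : ℕ) : ℝ) * lam := by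
      rw [← hrw, hκ (k + 1) (by omega), hκ (k + 2) (by omega)]
      simp only [show k + 1 + 1 = k + 2 from rfl, show k + 2 + 1 = k + 3 from rfl]
      have h1 := hSne (k + 1)
      have h2 := hSne (k + 2)
      field_simp
    show a (k + 3) = (X - C (((k + 2 : ℕ) : ℝ) + lam + κ (k + 2) - κ (k + 3))) * a (k + 2)
        - C (lam * ((k + 2 : ℕ) : ℝ) * S (k + 3) * S (k + 1) / S (k + 2) ^ 2) * a (k + 1)
    rw [hrw, H3, H2, H1, R2, R1]
    have hC := congrArg C hrw2
    simp only [map_add, map_mul, map_sub, map_pow, map_one, map_natCast, map_ofNat] at hC ⊢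
    push_cast at hC ⊢
    linear_combination hC * c k
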